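/- Let p be a prime and n ≥ 1. Let P be the set of permutations π of the finite set (Fin n → ZMod p) for which there exists a family of functions a_i : (Fin i → ZMod p) → ZMod p, 0 ≤ i < n, with (π x)_i = x_i + a_i(x_0, …, x_{i−1}) for all x and i. Then P is a subgroup of the symmetric group on (Fin n → ZMod p), its cardinality is p^{(p^n − 1)/(p − 1)}, the p-adic valuation of (p^n)! equals (p^n − 1)/(p − 1), and hence P is a Sylow p-subgroup of the symmetric group on (Fin n → ZMod p). -/
import Mathlib

namespace Kaloujnine

variable {p n : ℕ}

/-- Families of "triangular" data. -/
abbrev A (p n : ℕ) := (i : Fin n) → (Fin (i : ℕ) → ZMod p) → ZMod p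

/-- The triangular map associated to a family. -/
def f (a : A p n) (x : Fin n → ZMod p) : Fin n → ZMod p :=
  fun i => x i + a i (fun j : Fin (i : ℕ) => x ⟨(j : ℕ), j.2.trans i.2⟩)

theorem f_injective (a : A p n) : Function.Injective (f a) := by
  intro x y h
  have key : ∀ m : ℕ, ∀ i : Fin n, (i : ℕ) < m → x i = y i := by
    intro m
    induction m with
    | zero => intro i hi; omega
    | succ m IH =>
      intro i hi
      have h1 : f a x i = f a y i := congrFun h i
      have h2 : (fun j : Fin (i : ℕ) => x ⟨(j : ℕ), j.2.trans i.2⟩) =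
          (fun j : Fin (i : ℕ) => y ⟨(j : ℕ), j.2.trans i.2⟩) := by
        funext j
        exact IH ⟨(j : ℕ), j.2.trans i.2⟩ (Nat.lt_of_lt_of_le j.2 (Nat.lt_succ_iff.mp hi))
      simp only [f, h2] at h1
      exact add_right_cancel h1
  exact funext fun i => key ((i : ℕ) + 1) i (Nat.lt_succ_self _)

variable [NeZero p]

noncomputable def perm (a : A p n) : Equiv.Perm (Fin n → ZMod p) :=
  Equiv.ofBijective (f a) (Finite.injective_iff_bijective.mp (f_injective a))

@[simp] theorem perm_apply (a : A p n) (x : Fin n → ZMod p) : perm a x = f a x := rfl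

theorem perm_injective : Function.Injective (perm (p := p) (n := n)) := by
  intro a b h
  funext i y
  set x : Fin n → ZMod p := fun k => if hk : (k : ℕ) < (i : ℕ) then y ⟨(k : ℕ), hk⟩ else 0 with hx
  have h1 : f a x i = f b x i := by
    have : perm a x = perm b x := by rw [h]
    exact congrFun this i
  have hpre : (fun j : Fin (i : ℕ) => x ⟨(j : ℕ), j.2.trans i.2⟩) = y := by
    funext j
    show (if hk : ((⟨(j : ℕ), j.2.trans i.2⟩ : Fin n) : ℕ) < (i : ℕ) then y ⟨_, hk⟩ else 0) = y j
    exact dif_pos j.2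
  have hxi : x i = 0 := by
    show (if hk : ((i : Fin n) : ℕ) < (i : ℕ) then y ⟨_, hk⟩ else 0) = 0
    exact dif_neg (lt_irrefl _)
  simpa [f, hpre, hxi] using h1

def S (p n : ℕ) [NeZero p] : Set (Equiv.Perm (Fin n → ZMod p)) :=
  Set.range (perm (p := p) (n := n))

theorem mem_S_iff {π : Equiv.Perm (Fin n → ZMod p)} :
    π ∈ S p n ↔ ∃ a : A p n, ∀ (x : Fin n → ZMod p) (i : Fin n),
      π x i = x i + a i (fun j : Fin (i : ℕ) => x ⟨(j : ℕ), j.2.trans i.2⟩) := by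
  constructor
  · rintro ⟨a, rfl⟩; exact ⟨a, fun x i => rfl⟩
  · rintro ⟨a, ha⟩
    refine ⟨a, ?_⟩
    exact Equiv.ext fun x => funext fun i => (ha x i).symm

theorem one_mem_S : (1 : Equiv.Perm (Fin n → ZMod p)) ∈ S p n :=
  mem_S_iff.mpr ⟨fun _ _ => 0, fun x i => (add_zero _).symm⟩

theorem mul_mem_S {π σ : Equiv.Perm (Fin n → ZMod p)} (hπ : π ∈ S p n) (hσ : σ ∈ S p n) :
    π * σ ∈ S p n := by
  rw [mem_S_iff] at hπ hσ ⊢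
  obtain ⟨a, ha⟩ := hπ
  obtain ⟨b, hb⟩ := hσ
  refine ⟨fun i y => b i y + a i (fun j : Fin (i : ℕ) =>
    y j + b ⟨(j : ℕ), j.2.trans i.2⟩ (fun k : Fin (j : ℕ) => y ⟨(k : ℕ), k.2.trans j.2⟩)),
    fun x i => ?_⟩
  show π (σ x) i = _
  rw [ha (σ x) i]
  simp only [hb, add_assoc]

theorem pow_mem_S {π : Equiv.Perm (Fin n → ZMod p)} (hπ : π ∈ S p n) :
    ∀ k, π ^ k ∈ S p n := by
  intro k
  induction k with
  | zero => simpa using one_mem_S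
  | succ k IH => rw [pow_succ]; exact mul_mem_S IH hπ

theorem inv_mem_S {π : Equiv.Perm (Fin n → ZMod p)} (hπ : π ∈ S p n) : π⁻¹ ∈ S p n := by
  have h1 : π * π ^ (orderOf π - 1) = 1 := by
    rw [← pow_succ', Nat.sub_add_cancel (orderOf_pos π), pow_orderOf_eq_one]
  rw [inv_eq_of_mul_eq_one_right h1]
  exact pow_mem_S hπ _

noncomputable def H (p n : ℕ) [NeZero p] : Subgroup (Equiv.Perm (Fin n → ZMod p)) where
  carrier := S p n
  one_mem' := one_mem_S
  mul_mem' := mul_mem_S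
  inv_mem' := inv_mem_S

theorem card_H (hp : p.Prime) : Nat.card (H p n) = p ^ ((p ^ n - 1) / (p - 1)) := by
  have h1 : Nat.card (H p n) = Nat.card (A p n) := by
    exact Nat.card_range_of_injective perm_injective
  rw [h1]
  have h2 : Nat.card (A p n) = ∏ i : Fin n, p ^ p ^ (i : ℕ) := by
    simp [Nat.card_eq_fintype_card, Fintype.card_pi, Fintype.card_fun, ZMod.card]
  rw [h2, Finset.prod_pow_eq_pow_sum, Fin.sum_univ_eq_sum_range, Nat.geomSum_eq hp.two_le]

theorem legendre (hp : p.Prime) (n : ℕ) :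
    (Nat.factorial (p ^ n)).factorization p = (p ^ n - 1) / (p - 1) := by
  haveI : Fact p.Prime := ⟨hp⟩
  rw [Nat.factorization_def _ hp,
    padicValNat_factorial (b := n + 1) (by rw [Nat.log_pow hp.one_lt]; omega),
    Finset.sum_Ico_eq_sum_range]
  simp only [Nat.add_sub_cancel]
  have h3 : ∀ i ∈ Finset.range n, p ^ n / p ^ (1 + i) = p ^ (n - 1 - i) := by
    intro i hi
    have := Finset.mem_range.mp hi
    rw [Nat.pow_div (by omega) hp.pos]
    congr 1
    omega
  rw [Finset.sum_congr rfl h3, ← Nat.geomSum_eq hp.two_le]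
  exact Finset.sum_range_reflect (fun j => p ^ j) n

end Kaloujnine
/-- for a prime `p` and `n ≥ 1`, the set of permutations of
`Fin n → ZMod p` of triangular form `(π x)_i = x_i + a_i(x_0, …, x_{i−1})` is a subgroup
of the symmetric group of `Fin n → ZMod p`; its cardinality is `p ^ ((p^n − 1)/(p − 1))`,
the `p`-adic valuation of `(p^n)!` equals `(p^n − 1)/(p − 1)`, and hence this subgroup is
a Sylow `p`-subgroup of the symmetric group. -/
theorem kaloujnine_sylow (p : ℕ) (hp : p.Prime) (n : ℕ) (hn : 1 ≤ n) :
    ∃ H : Subgroup (Equiv.Perm (Fin n → ZMod p)),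
      (H : Set (Equiv.Perm (Fin n → ZMod p))) =
        {π : Equiv.Perm (Fin n → ZMod p) |
          ∃ a : (i : Fin n) → ((Fin (i : ℕ) → ZMod p) → ZMod p),
            ∀ (x : Fin n → ZMod p) (i : Fin n),
              π x i = x i + a i (fun j : Fin (i : ℕ) => x ⟨(j : ℕ), j.2.trans i.2⟩)} ∧
      Nat.card H = p ^ ((p ^ n - 1) / (p - 1)) ∧
      (Nat.factorial (p ^ n)).factorization p = (p ^ n - 1) / (p - 1) ∧
      ∃ P : Sylow p (Equiv.Perm (Fin n → ZMod p)), (P : Subgroup (Equiv.Perm (Fin n → ZMod p))) = H := by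
  haveI : Fact p.Prime := ⟨hp⟩
  haveI : NeZero p := ⟨hp.pos.ne'⟩
  refine ⟨Kaloujnine.H p n, ?_, Kaloujnine.card_H hp, Kaloujnine.legendre hp n, ?_⟩
  · ext π
    exact Kaloujnine.mem_S_iff
  · have hG : Nat.card (Equiv.Perm (Fin n → ZMod p)) = Nat.factorial (p ^ n) := by
      simp [Nat.card_eq_fintype_card, Fintype.card_perm, Fintype.card_fun, ZMod.card]
    have hcard : Nat.card (Kaloujnine.H p n) =
        p ^ (Nat.card (Equiv.Perm (Fin n → ZMod p))).factorization p := by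
      rw [Kaloujnine.card_H hp, hG, Kaloujnine.legendre hp n]
    exact ⟨Sylow.ofCard _ hcard, Sylow.coe_ofCard _ hcard⟩
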